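/- Let G be a finite simple graph of order n ≥ 1. For every integer m with n+1 ≤ m ≤ 2n, the number of accurate dominating sets of the corona G ∘ K_1 of cardinality m equals C(n, m−n) · 2^{2n−m}. -/

import Mathlib

/-- `D` is a dominating set of the simple graph `G`: every vertex not in `D`
is adjacent to at least one vertex in `D`. -/
def IsDomSet {V : Type*} (G : SimpleGraph V) (D : Finset V) : Prop :=
  ∀ v : V, v ∉ D → ∃ u ∈ D, G.Adj u v

/-- `D` is an accurate dominating set of `G`: a dominating set such that no subset of
`V \ D` of cardinality `|D|` is a dominating set of `G`. -/
def IsAccDomSet {V : Type*} (G : SimpleGraph V) (D : Finset V) : Prop :=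
  IsDomSet G D ∧
    ∀ E : Finset V, (∀ v ∈ E, v ∉ D) → E.card = D.card → ¬ IsDomSet G E

/-- The domination number of `G`: the minimum cardinality of a dominating set. -/
noncomputable def domNum {V : Type*} (G : SimpleGraph V) : ℕ :=
  sInf {k | ∃ D : Finset V, IsDomSet G D ∧ D.card = k}

/-- The accurate domination number of `G`: the minimum cardinality of an accurate
dominating set. -/
noncomputable def accDomNum {V : Type*} (G : SimpleGraph V) : ℕ :=
  sInf {k | ∃ D : Finset V, IsAccDomSet G D ∧ D.card = k}

/-- `d(G,i)`: the number of dominating sets of `G` of cardinality `i`. -/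
noncomputable def numDomSets {V : Type*} (G : SimpleGraph V) (i : ℕ) : ℕ :=
  Set.ncard {D : Finset V | IsDomSet G D ∧ D.card = i}

/-- `d_a(G,i)`: the number of accurate dominating sets of `G` of cardinality `i`. -/
noncomputable def numAccDomSets {V : Type*} (G : SimpleGraph V) (i : ℕ) : ℕ :=
  Set.ncard {D : Finset V | IsAccDomSet G D ∧ D.card = i}

/-- The corona `G ∘ K_1`: for each vertex `v` of `G` (sitting as `Sum.inl v`) a new
pendant vertex `Sum.inr v` is attached. -/
def corona {V : Type*} (G : SimpleGraph V) : SimpleGraph (V ⊕ V) :=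
  SimpleGraph.fromRel (fun x y =>
    (∃ u v : V, x = Sum.inl u ∧ y = Sum.inl v ∧ G.Adj u v) ∨
    (∃ v : V, x = Sum.inl v ∧ y = Sum.inr v))

lemma corona_dom_iff {V : Type*} (G : SimpleGraph V) (D : Finset (V ⊕ V)) :
    IsDomSet (corona G) D ↔ ∀ v : V, Sum.inl v ∈ D ∨ Sum.inr v ∈ D := by
  constructor
  · intro h v
    by_contra hc
    push_neg at hc
    obtain ⟨u, hu, hadj⟩ := h (Sum.inr v) hc.2
    have : u = Sum.inl v := by
      rcases hadj with ⟨_, hr | hr⟩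
      · rcases hr with ⟨a, b, _, hb, _⟩ | ⟨a, ha, hb⟩
        · exact absurd hb (by simp)
        · rw [Sum.inr.injEq] at hb; subst hb; exact ha
      · rcases hr with ⟨a, b, ha, _, _⟩ | ⟨a, ha, _⟩
        · exact absurd ha (by simp)
        · exact absurd ha (by simp)
    rw [this] at hu
    exact hc.1 hu
  · intro h x hx
    match x with
    | Sum.inl v =>
      rcases h v with hv | hv
      · exact absurd hv hx
      · exact ⟨Sum.inr v, hv, by
          constructor
          · simp
          · right; right; exact ⟨v, rfl, rfl⟩⟩
    | Sum.inr v =>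
      rcases h v with hv | hv
      · exact ⟨Sum.inl v, hv, by
          constructor
          · simp
          · left; right; exact ⟨v, rfl, rfl⟩⟩
      · exact absurd hv hx

open Finset in
lemma corona_count {V : Type*} [Fintype V] [DecidableEq V] (m : ℕ)
    (h1 : Fintype.card V + 1 ≤ m) (h2 : m ≤ 2 * Fintype.card V) :
    (Finset.univ.filter (fun D : Finset (V ⊕ V) =>
        (∀ v : V, Sum.inl v ∈ D ∨ Sum.inr v ∈ D) ∧ D.card = m)).card =
      Nat.choose (Fintype.card V) (m - Fintype.card V) *
        2 ^ (2 * Fintype.card V - m) := by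
  classical
  set n := Fintype.card V with hn
  set fwd : Finset (V ⊕ V) → (Σ _ : Finset V, Finset V) := fun D =>
    ⟨(univ.filter fun v => Sum.inl v ∈ D) ∩ (univ.filter fun v => Sum.inr v ∈ D),
     (univ.filter fun v => Sum.inl v ∈ D) \ (univ.filter fun v => Sum.inr v ∈ D)⟩ with hfwd
  set bwd : (Σ _ : Finset V, Finset V) → Finset (V ⊕ V) := fun p =>
    (p.1 ∪ p.2).image Sum.inl ∪ (p.2ᶜ).image Sum.inr with hbwd
  have hmemL : ∀ (p : Σ _ : Finset V, Finset V) (v : V),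
      Sum.inl v ∈ bwd p ↔ v ∈ p.1 ∪ p.2 := by
    intro p v; simp [hbwd]
  have hmemR : ∀ (p : Σ _ : Finset V, Finset V) (v : V),
      Sum.inr v ∈ bwd p ↔ v ∉ p.2 := by
    intro p v; simp [hbwd]
  have hdecomp : ∀ D : Finset (V ⊕ V),
      D = (univ.filter fun v => Sum.inl v ∈ D).image Sum.inl ∪
          (univ.filter fun v => Sum.inr v ∈ D).image Sum.inr := by
    intro D; ext x; rcases x with v | v <;> simp
  have hcardD : ∀ D : Finset (V ⊕ V),
      D.card = (univ.filter fun v => Sum.inl v ∈ D).card +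
        (univ.filter fun v => Sum.inr v ∈ D).card := by
    intro D
    conv_lhs => rw [hdecomp D]
    rw [Finset.card_union_of_disjoint, Finset.card_image_of_injective _ Sum.inl_injective,
      Finset.card_image_of_injective _ Sum.inr_injective]
    rw [Finset.disjoint_left]
    rintro x hx hy
    simp only [Finset.mem_image] at hx hy
    obtain ⟨a, _, rfl⟩ := hx
    obtain ⟨b, _, hb⟩ := hy
    simp at hb
  rw [Finset.card_nbij' fwd bwd
    (t := (univ.powersetCard (m - n)).sigma (fun A => Aᶜ.powerset))]
  · rw [Finset.card_sigma]
    rw [Finset.sum_congr rfl (fun A hA => ?_)]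
    · rw [Finset.sum_const, Finset.card_powersetCard, Finset.card_univ, smul_eq_mul]
    · rw [Finset.card_powerset, Finset.card_compl]
      rw [Finset.mem_powersetCard_univ] at hA
      rw [hA]
      congr 1
      omega
  · -- hi : fwd maps into the sigma set
    intro D hD
    rw [Finset.mem_coe, Finset.mem_filter] at hD
    obtain ⟨_, hhit, hcard⟩ := hD
    set SL := univ.filter fun v => Sum.inl v ∈ D
    set SR := univ.filter fun v => Sum.inr v ∈ D
    have hunion : SL ∪ SR = univ := by
      ext v; simp only [SL, SR, Finset.mem_union, Finset.mem_filter, Finset.mem_univ,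
        true_and, iff_true]
      exact hhit v
    have hcards : (SL ∪ SR).card + (SL ∩ SR).card = SL.card + SR.card :=
      Finset.card_union_add_card_inter SL SR
    rw [hunion, Finset.card_univ] at hcards
    have hm : SL.card + SR.card = m := by rw [← hcardD D]; exact hcard
    rw [Finset.mem_coe, Finset.mem_sigma]
    constructor
    · rw [Finset.mem_powersetCard_univ]
      show (SL ∩ SR).card = m - n
      omega
    · rw [Finset.mem_powerset]
      intro v hv
      simp only [fwd, SL, SR, Finset.mem_sdiff] at hv
      simp only [fwd, Finset.mem_compl, Finset.mem_inter]
      tauto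
  · -- hj : bwd maps into the filter set
    rintro ⟨A, B⟩ hp
    rw [Finset.mem_coe, Finset.mem_sigma, Finset.mem_powersetCard_univ, Finset.mem_powerset] at hp
    obtain ⟨hA', hB'⟩ := hp
    have hA : A.card = m - n := hA'
    have hB : B ⊆ Aᶜ := hB'
    rw [Finset.mem_coe, Finset.mem_filter]
    refine ⟨Finset.mem_univ _, fun v => ?_, ?_⟩
    · by_cases hv : v ∈ B
      · left; rw [hmemL]; exact Finset.mem_union_right _ hv
      · right; rw [hmemR]; exact hv
    · show ((A ∪ B).image Sum.inl ∪ Bᶜ.image Sum.inr).card = m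
      rw [Finset.card_union_of_disjoint, Finset.card_image_of_injective _ Sum.inl_injective,
        Finset.card_image_of_injective _ Sum.inr_injective,
        Finset.card_union_of_disjoint, Finset.card_compl, hA]
      · have hBn : B.card ≤ n := Finset.card_le_univ B
        omega
      · rw [Finset.disjoint_left]
        intro v hv hv'
        exact absurd (hB hv') (by simp [hv])
      · rw [Finset.disjoint_left]
        rintro x hx hy
        simp only [Finset.mem_image] at hx hy
        obtain ⟨a, _, rfl⟩ := hx
        obtain ⟨b, _, hb⟩ := hy
        simp at hb
  · -- left inverse
    intro D hD
    rw [Finset.mem_coe, Finset.mem_filter] at hD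
    obtain ⟨_, hhit, _⟩ := hD
    ext x
    rcases x with v | v
    · rw [hmemL]
      simp only [hfwd, Finset.mem_union, Finset.mem_inter, Finset.mem_sdiff,
        Finset.mem_filter, Finset.mem_univ, true_and]
      tauto
    · rw [hmemR]
      simp only [hfwd, Finset.mem_sdiff, Finset.mem_filter, Finset.mem_univ, true_and]
      have := hhit v
      tauto
  · -- right inverse
    rintro ⟨A, B⟩ hp
    rw [Finset.mem_coe, Finset.mem_sigma, Finset.mem_powersetCard_univ, Finset.mem_powerset] at hp
    obtain ⟨hA', hB'⟩ := hp
    have hB : B ⊆ Aᶜ := hB'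
    have e1 : (Finset.univ.filter fun v => Sum.inl v ∈ bwd ⟨A, B⟩) ∩
        (Finset.univ.filter fun v => Sum.inr v ∈ bwd ⟨A, B⟩) = A := by
      ext v
      simp only [Finset.mem_inter, Finset.mem_filter, Finset.mem_univ, true_and,
        hmemL, hmemR, Finset.mem_union]
      constructor
      · rintro ⟨hv1 | hv1, hv2⟩
        · exact hv1
        · exact absurd hv1 hv2
      · intro hv
        refine ⟨Or.inl hv, fun hvB => ?_⟩
        exact absurd hv (by simpa using hB hvB)
    have e2 : (Finset.univ.filter fun v => Sum.inl v ∈ bwd ⟨A, B⟩) \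
        (Finset.univ.filter fun v => Sum.inr v ∈ bwd ⟨A, B⟩) = B := by
      ext v
      simp only [Finset.mem_sdiff, Finset.mem_filter, Finset.mem_univ, true_and,
        hmemL, hmemR, Finset.mem_union, not_not]
      constructor
      · rintro ⟨hv1 | hv1, hv2⟩
        · exact hv2
        · exact hv1
      · intro hv
        exact ⟨Or.inr hv, hv⟩
    rw [hfwd]
    dsimp only
    rw [e1, e2]

/-- For a graph `G` of order `n ≥ 1` and every `m` with `n + 1 ≤ m ≤ 2n`, the number
of accurate dominating sets of the corona `G ∘ K_1` of cardinality `m` equals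
`C(n, m - n) * 2^(2n - m)`. -/
theorem corona_numAccDomSets {V : Type*} [Fintype V] [Nonempty V] (G : SimpleGraph V)
    (m : ℕ) (h1 : Fintype.card V + 1 ≤ m) (h2 : m ≤ 2 * Fintype.card V) :
    numAccDomSets (corona G) m =
      Nat.choose (Fintype.card V) (m - Fintype.card V) *
        2 ^ (2 * Fintype.card V - m) := by
  classical
  set n := Fintype.card V with hn
  have hset : {D : Finset (V ⊕ V) | IsAccDomSet (corona G) D ∧ D.card = m} =
      ↑(Finset.univ.filter (fun D : Finset (V ⊕ V) =>
        (∀ v : V, Sum.inl v ∈ D ∨ Sum.inr v ∈ D) ∧ D.card = m)) := by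
    ext D
    simp only [Set.mem_setOf_eq, Finset.coe_filter, Finset.mem_univ, true_and,
      Set.mem_setOf_eq]
    constructor
    · rintro ⟨⟨hdom, _⟩, hcard⟩
      exact ⟨(corona_dom_iff G D).mp hdom, hcard⟩
    · rintro ⟨hhit, hcard⟩
      refine ⟨⟨(corona_dom_iff G D).mpr hhit, ?_⟩, hcard⟩
      intro E hE hEcard _
      have hsub : E ⊆ Finset.univ \ D := by
        intro v hv
        rw [Finset.mem_sdiff]
        exact ⟨Finset.mem_univ v, hE v hv⟩
      have := Finset.card_le_card hsub
      rw [Finset.card_sdiff_of_subset (Finset.subset_univ D), Finset.card_univ,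
        Fintype.card_sum] at this
      omega
  rw [numAccDomSets, hset, Set.ncard_coe_finset]
  exact corona_count m h1 h2
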